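/- Let U be an open subset of ℂ² and let a_{11}, a_{12}, a_{21}, a_{22} be functions holomorphic on U. Define b_j = a_{22}·∂₁a_{1j} − a_{12}·∂₁a_{2j} − a_{21}·∂₂a_{1j} + a_{11}·∂₂a_{2j} for j = 1,2, and det a = a_{11}a_{22} − a_{12}a_{21}. Then for all functions φ₁, φ₂ on U, at every point of U: (b₁φ₁ + b₂φ₂) − (∂₁(det a)·φ₁ + ∂₂(det a)·φ₂) = (∂₂a_{21} − ∂₁a_{22})·(a_{11}φ₁ + a_{12}φ₂) + (∂₁a_{12} − ∂₂a_{11})·(a_{21}φ₁ + a_{22}φ₂). In particular, the difference between the vector produced by the new procedure and the gradient of the determinant is a linear combination, with holomorphic coefficients, of the two row dot products a_{j1}φ₁ + a_{j2}φ₂ (j = 1,2). -/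

import Mathlib

/-- **The computation of §6.4 of the paper.**  For a `2×2` matrix of holomorphic
functions on an open `U ⊆ ℂ²`, the difference between the vector `(b₁,b₂)` produced
by the new procedure of Theorem (6.2) and the gradient of the determinant, dotted
with any test functions `(φ₁,φ₂)`, is a combination of the row dot products
`a_{j1}φ₁ + a_{j2}φ₂`; hence for 3-dimensional special domains the new procedure
gives no new vector multipliers. -/
theorem two_by_two_new_procedure_difference
    (U : Set (ℂ × ℂ)) (hU : IsOpen U)
    (a₁₁ a₁₂ a₂₁ a₂₂ : ℂ × ℂ → ℂ)
    (ha₁₁ : DifferentiableOn ℂ a₁₁ U) (ha₁₂ : DifferentiableOn ℂ a₁₂ U)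
    (ha₂₁ : DifferentiableOn ℂ a₂₁ U) (ha₂₂ : DifferentiableOn ℂ a₂₂ U)
    (b₁ b₂ deta : ℂ × ℂ → ℂ)
    (hb₁ : b₁ = fun z => a₂₂ z * fderiv ℂ a₁₁ z (1, 0) - a₁₂ z * fderiv ℂ a₂₁ z (1, 0)
        - a₂₁ z * fderiv ℂ a₁₁ z (0, 1) + a₁₁ z * fderiv ℂ a₂₁ z (0, 1))
    (hb₂ : b₂ = fun z => a₂₂ z * fderiv ℂ a₁₂ z (1, 0) - a₁₂ z * fderiv ℂ a₂₂ z (1, 0)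
        - a₂₁ z * fderiv ℂ a₁₂ z (0, 1) + a₁₁ z * fderiv ℂ a₂₂ z (0, 1))
    (hdet : deta = fun z => a₁₁ z * a₂₂ z - a₁₂ z * a₂₁ z)
    (φ₁ φ₂ : ℂ × ℂ → ℂ) (z : ℂ × ℂ) (hz : z ∈ U) :
    (b₁ z * φ₁ z + b₂ z * φ₂ z) -
        (fderiv ℂ deta z (1, 0) * φ₁ z + fderiv ℂ deta z (0, 1) * φ₂ z) =
      (fderiv ℂ a₂₁ z (0, 1) - fderiv ℂ a₂₂ z (1, 0)) * (a₁₁ z * φ₁ z + a₁₂ z * φ₂ z) +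
        (fderiv ℂ a₁₂ z (1, 0) - fderiv ℂ a₁₁ z (0, 1)) * (a₂₁ z * φ₁ z + a₂₂ z * φ₂ z) := by
  have h11 := (ha₁₁.differentiableAt (hU.mem_nhds hz))
  have h12 := (ha₁₂.differentiableAt (hU.mem_nhds hz))
  have h21 := (ha₂₁.differentiableAt (hU.mem_nhds hz))
  have h22 := (ha₂₂.differentiableAt (hU.mem_nhds hz))
  have hd : fderiv ℂ deta z
      = a₁₁ z • fderiv ℂ a₂₂ z + a₂₂ z • fderiv ℂ a₁₁ z
        - (a₁₂ z • fderiv ℂ a₂₁ z + a₂₁ z • fderiv ℂ a₁₂ z) := by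
    rw [hdet]
    rw [fderiv_fun_sub (h11.fun_mul h22) (h12.fun_mul h21), fderiv_fun_mul h11 h22, fderiv_fun_mul h12 h21]
  subst hb₁ hb₂
  simp only [hd, ContinuousLinearMap.sub_apply, ContinuousLinearMap.add_apply,
    ContinuousLinearMap.smul_apply, smul_eq_mul]
  ring
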